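/- Let $G$ be a finite group and let $H$ be an abelian subgroup of $G$. Then $\{\alpha^{[G:H]} \mid \alpha \in S(H)\} \subseteq S(G) \subseteq S(H)$, where $[G:H]$ denotes the index of $H$ in $G$. -/

import Mathlib

set_option linter.unusedSectionVars false

open scoped Classical

/-- The group determinant of a finite group `G`: the determinant of the matrix whose
`(g, h)` entry is `x (g * h⁻¹)`. -/
noncomputable def groupDet (G : Type*) [Group G] [Fintype G] {R : Type*} [CommRing R]
    (x : G → R) : R :=
  Matrix.det (Matrix.of fun g h : G => x (g * h⁻¹))

open Matrix

namespace GDaux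

universe u v

variable {m : Type*} [Fintype m] [DecidableEq m]

/-- Expand a matrix over `R` into a big matrix over `A` via `φ : R → Matrix m m A`. -/
def blk {R : Type u} {A : Type v} {ι κ : Type*} (φ : R → Matrix m m A)
    (B : Matrix ι κ R) : Matrix (ι × m) (κ × m) A :=
  Matrix.of fun ik jl => φ (B ik.1 jl.1) ik.2 jl.2

theorem blk_apply {R : Type u} {A : Type v} {ι κ : Type*} (φ : R → Matrix m m A)
    (B : Matrix ι κ R) (i j k l) : blk φ B (i, k) (j, l) = φ (B i j) k l := rfl

variable {R : Type u} {A : Type v} [CommRing R] [CommRing A]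

theorem blk_mul {ι κ τ : Type*} [Fintype κ] (φ : R →+* Matrix m m A)
    (M : Matrix ι κ R) (N : Matrix κ τ R) :
    blk (φ : R → _) (M * N) = blk (φ : R → _) M * blk (φ : R → _) N := by
  ext ⟨i, k⟩ ⟨j, l⟩
  simp only [blk_apply, Matrix.mul_apply, Fintype.sum_prod_type]
  rw [map_sum φ _ Finset.univ]
  simp only [Matrix.sum_apply]
  refine Finset.sum_congr rfl fun c _ => ?_
  rw [_root_.map_mul, Matrix.mul_apply]

theorem blk_zero {ι κ : Type*} (φ : R →+* Matrix m m A) :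
    blk (φ : R → _) (0 : Matrix ι κ R) = 0 := by
  ext ⟨i, k⟩ ⟨j, l⟩
  simp [blk_apply]

theorem blk_fromBlocks {α β γ δ : Type*} (φ : R → Matrix m m A)
    (P : Matrix α γ R) (Q : Matrix α δ R) (S : Matrix β γ R) (T : Matrix β δ R) :
    blk φ (fromBlocks P Q S T) =
      (fromBlocks (blk φ P) (blk φ Q) (blk φ S) (blk φ T)).submatrix
        (Equiv.sumProdDistrib α β m) (Equiv.sumProdDistrib γ δ m) := by
  ext ⟨i, k⟩ ⟨j, l⟩
  rcases i with i | i <;> rcases j with j | j <;> rfl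

theorem blk_submatrix {ι κ ι' κ' : Type*} (φ : R → Matrix m m A)
    (B : Matrix ι κ R) (f : ι' → ι) (g : κ' → κ) :
    blk φ (B.submatrix f g) = (blk φ B).submatrix (Prod.map f id) (Prod.map g id) := rfl

theorem det_blk_smul_one {ι : Type*} [Fintype ι] [DecidableEq ι]
    (φ : R →+* Matrix m m A) (d : R) :
    (blk (φ : R → _) (d • (1 : Matrix ι ι R))).det = (φ d).det ^ Fintype.card ι := by
  have h : blk (φ : R → _) (d • (1 : Matrix ι ι R)) =
      (blockDiagonal fun _ : ι => φ d).submatrix (Equiv.prodComm ι m) (Equiv.prodComm ι m) := by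
    ext ⟨i, k⟩ ⟨j, l⟩
    simp only [blk_apply, Matrix.smul_apply, Matrix.one_apply, smul_eq_mul, mul_ite, mul_one,
      mul_zero, submatrix_apply, Equiv.prodComm_apply, Prod.swap_prod_mk, blockDiagonal_apply]
    split_ifs with h1 <;> simp [h1, map_zero]
  rw [h, det_submatrix_equiv_self, det_blockDiagonal, Finset.prod_const, Finset.card_univ]

theorem det_blk_one {ι : Type*} [Fintype ι] [DecidableEq ι] (φ : R →+* Matrix m m A) :
    (blk (φ : R → _) (1 : Matrix ι ι R)).det = 1 := by
  have := det_blk_smul_one (ι := ι) φ 1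
  simpa using this

end GDaux

namespace GDaux

variable {m : Type*} [Fintype m] [DecidableEq m]
variable {R : Type u} {A : Type v} [CommRing R] [CommRing A]

/-- `Fin 1 × m ≃ m`. -/
def finOneProd {m : Type*} : Fin 1 × m ≃ m :=
  ⟨fun p => p.2, fun k => (0, k), fun ⟨i, k⟩ => by fin_cases i <;> rfl, fun k => rfl⟩

theorem keyAux {n : ℕ} (φ : R →+* Matrix m m A)
    (IH : ∀ (E : Matrix (Fin n) (Fin n) R), (blk (φ : R → _) E).det = (φ E.det).det)
    (D : Matrix (Fin 1 ⊕ Fin n) (Fin 1 ⊕ Fin n) R) :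
    (φ (D (Sum.inl 0) (Sum.inl 0))).det ^ n * (blk (φ : R → _) D).det =
      (φ (D (Sum.inl 0) (Sum.inl 0))).det ^ n * (φ D.det).det := by
  set a : R := D (Sum.inl 0) (Sum.inl 0) with ha
  set D11 := D.toBlocks₁₁ with hD11
  set D12 := D.toBlocks₁₂
  set D21 := D.toBlocks₂₁
  set D22 := D.toBlocks₂₂
  have hD : D = fromBlocks D11 D12 D21 D22 := (fromBlocks_toBlocks D).symm
  set L : Matrix (Fin 1 ⊕ Fin n) (Fin 1 ⊕ Fin n) R :=
    fromBlocks 1 0 (-D21) (a • 1) with hL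
  have hD11a : D11 = a • (1 : Matrix (Fin 1) (Fin 1) R) := by
    ext i j
    fin_cases i; fin_cases j
    simp [hD11, toBlocks₁₁, ha]
  set E : Matrix (Fin n) (Fin n) R := a • D22 - D21 * D12 with hE
  have hLD : L * D = fromBlocks D11 D12 0 E := by
    rw [hD, hL, fromBlocks_multiply, hD11a, fromBlocks_inj]
    refine ⟨by simp, by simp, ?_, ?_⟩
    · rw [Matrix.mul_smul, Matrix.smul_mul]
      simp
    · rw [hE, Matrix.smul_mul, Matrix.one_mul, sub_eq_add_neg, add_comm, Matrix.neg_mul]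
  have detL : L.det = a ^ n := by
    rw [hL, det_fromBlocks_zero₁₂, Matrix.det_one, one_mul, Matrix.det_smul, Matrix.det_one,
      mul_one, Fintype.card_fin]
  have detLD : (L * D).det = a * E.det := by
    rw [hLD, det_fromBlocks_zero₂₁, Matrix.det_fin_one]
    rfl
  have hdet : a ^ n * D.det = a * E.det := by
    rw [← detL, ← Matrix.det_mul, detLD]
  have detblkL : (blk (φ : R → _) L).det = (φ a).det ^ n := by
    rw [hL, blk_fromBlocks, det_submatrix_equiv_self, blk_zero φ, det_fromBlocks_zero₁₂,
      det_blk_one, one_mul, det_blk_smul_one, Fintype.card_fin]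
  have detD11 : (blk (φ : R → _) D11).det = (φ a).det := by
    have h : blk (φ : R → _) D11 = (φ a).submatrix finOneProd finOneProd := by
      ext ⟨i, k⟩ ⟨j, l⟩
      have hij : D11 i j = a := by fin_cases i; fin_cases j; rfl
      simp [blk_apply, hij, finOneProd]
    rw [h, det_submatrix_equiv_self]
  have detblkLD : (blk (φ : R → _) (L * D)).det = (φ a).det * (φ E.det).det := by
    rw [hLD, blk_fromBlocks, det_submatrix_equiv_self, blk_zero φ, det_fromBlocks_zero₂₁,
      detD11, IH]
  have detblkLD2 : (blk (φ : R → _) (L * D)).det = (φ a).det ^ n * (blk (φ : R → _) D).det := by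
    rw [blk_mul, Matrix.det_mul, detblkL]
  rw [← detblkLD2, detblkLD, ← Matrix.det_pow, ← map_pow, ← Matrix.det_mul,
    ← _root_.map_mul φ a E.det, ← hdet, _root_.map_mul, Matrix.det_mul]

end GDaux

namespace GDaux

theorem blk_det {m : Type w} [Fintype m] [DecidableEq m] :
    ∀ (n : ℕ) {R : Type u} {A : Type v} [CommRing R] [CommRing A]
      (φ : R →+* Matrix m m A) (B : Matrix (Fin n) (Fin n) R),
      (blk (φ : R → _) B).det = (φ B.det).det := by
  intro n
  induction n with
  | zero =>
    intro R A _ _ φ B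
    have h1 : (blk (φ : R → _) B).det = 1 := Matrix.det_isEmpty
    rw [h1, Matrix.det_fin_zero, _root_.map_one, Matrix.det_one]
  | succ n IH =>
    intro R A _ _ φ B
    let e : Fin 1 ⊕ Fin n ≃ Fin (n + 1) := finSumFinEquiv.trans (finCongr (by omega))
    set C : Matrix (Fin 1 ⊕ Fin n) (Fin 1 ⊕ Fin n) R := B.submatrix e e with hC
    have hdetC : C.det = B.det := det_submatrix_equiv_self e B
    have hblkC : (blk (φ : R → _) C).det = (blk (φ : R → _) B).det := by
      rw [hC, blk_submatrix]
      exact det_submatrix_equiv_self (Equiv.prodCongr e (Equiv.refl m)) _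
    rw [← hblkC, ← hdetC]
    clear hblkC hdetC hC
    -- polynomial trick
    let ψ : R →+* Matrix m m (Polynomial A) :=
      (RingHom.mapMatrix (Polynomial.C : A →+* Polynomial A)).comp φ
    have hcomm : ∀ r : R, Commute (ψ r) (Matrix.scalar m (Polynomial.X : Polynomial A)) :=
      fun r => (Matrix.scalar_commute _ (fun r' => Commute.all _ _) _).symm
    let φt : Polynomial R →+* Matrix m m (Polynomial A) :=
      Polynomial.eval₂RingHom' ψ (Matrix.scalar m Polynomial.X) hcomm
    let i0 : Fin 1 ⊕ Fin n := Sum.inl 0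
    set Ct : Matrix (Fin 1 ⊕ Fin n) (Fin 1 ⊕ Fin n) (Polynomial R) :=
      C.map (Polynomial.C) + Matrix.single i0 i0 Polynomial.X with hCt
    have hφtC : ∀ r : R, φt (Polynomial.C r) = (φ r).map Polynomial.C := fun r => by
      simp [φt, ψ]
    have hφtX : φt Polynomial.X = Matrix.scalar m Polynomial.X := by
      simp [φt]
    have hCt00 : Ct i0 i0 = Polynomial.C (C i0 i0) + Polynomial.X := by
      simp [hCt, Matrix.add_apply, Matrix.map_apply, Matrix.single_apply_same]
    have hmonic : ((φt (Ct i0 i0)).det).Monic := by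
      have h2 : φt (Ct i0 i0) = Matrix.charmatrix (-(φ (C i0 i0))) := by
        rw [hCt00, map_add, hφtC, hφtX]
        ext k l
        simp [Matrix.charmatrix, Matrix.map_apply, Matrix.add_apply, Matrix.sub_apply]
        ring
      rw [h2]
      exact Matrix.charpoly_monic _
    have hkey := keyAux (n := n) φt (fun E => IH φt E) Ct
    have hcancel : (blk (φt : Polynomial R → _) Ct).det = (φt Ct.det).det :=
      ((hmonic.pow (n := n)).isRegular).left hkey
    let ε : Polynomial A →+* A := Polynomial.evalRingHom 0
    let εR : Polynomial R →+* R := Polynomial.evalRingHom 0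
    have hχ : (RingHom.mapMatrix ε).comp φt = φ.comp εR := by
      apply Polynomial.ringHom_ext
      · intro r
        simp only [RingHom.comp_apply, hφtC, RingHom.mapMatrix_apply]
        ext k l
        simp [Matrix.map_apply, ε, εR]
      · simp only [RingHom.comp_apply, hφtX, RingHom.mapMatrix_apply]
        ext k l
        simp [Matrix.map_apply, Matrix.scalar_apply, ε, εR, Matrix.diagonal, Matrix.of_apply,
          apply_ite (Polynomial.eval (0 : A))]
    have hCtmap : Ct.map εR = C := by
      ext i j
      simp [hCt, Matrix.map_apply, Matrix.add_apply, εR, Matrix.single,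
        apply_ite (Polynomial.eval (0 : R))]
    have hblkmap : (blk (φt : Polynomial R → _) Ct).map ε = blk (φ : R → _) C := by
      ext ⟨i, k⟩ ⟨j, l⟩
      show ε (φt (Ct i j) k l) = φ (C i j) k l
      have h3 := DFunLike.congr_fun hχ (Ct i j)
      simp only [RingHom.comp_apply, RingHom.mapMatrix_apply] at h3
      have h4 : εR (Ct i j) = C i j := by
        have := congrFun (congrFun (congrArg (fun M => (M : _ → _ → R)) hCtmap) i) j
        simpa [Matrix.map_apply] using this
      calc ε (φt (Ct i j) k l) = ((φt (Ct i j)).map ε) k l := rfl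
        _ = (φ (εR (Ct i j))) k l := by rw [h3]
        _ = φ (C i j) k l := by rw [h4]
    have h5 : εR Ct.det = C.det := by
      rw [RingHom.map_det, RingHom.mapMatrix_apply, hCtmap]
    calc (blk (φ : R → _) C).det = ((blk (φt : Polynomial R → _) Ct).map ε).det := by
          rw [hblkmap]
      _ = ε ((blk (φt : Polynomial R → _) Ct).det) := (RingHom.map_det ε _).symm
      _ = ε ((φt Ct.det).det) := by rw [hcancel]
      _ = ((φt Ct.det).map ε).det := RingHom.map_det ε _
      _ = (φ (εR Ct.det)).det := by
          have h3 := DFunLike.congr_fun hχ Ct.det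
          simp only [RingHom.comp_apply, RingHom.mapMatrix_apply] at h3
          rw [h3]
      _ = (φ C.det).det := by rw [h5]

end GDaux

namespace GDaux

/-- The blk determinant theorem over an arbitrary finite index type. -/
theorem blk_det' {m : Type w} [Fintype m] [DecidableEq m] {ι : Type*} [Fintype ι] [DecidableEq ι]
    {R : Type u} {A : Type v} [CommRing R] [CommRing A]
    (φ : R →+* Matrix m m A) (B : Matrix ι ι R) :
    (blk (φ : R → _) B).det = (φ B.det).det := by
  let e : ι ≃ Fin (Fintype.card ι) := Fintype.equivFin ι
  have h := blk_det (Fintype.card ι) φ (B.submatrix e.symm e.symm)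
  have h2 : (blk (φ : R → _) (B.submatrix e.symm e.symm)).det = (blk (φ : R → _) B).det := by
    rw [blk_submatrix]
    exact det_submatrix_equiv_self (Equiv.prodCongr e.symm (Equiv.refl m)) _
  rw [h2, det_submatrix_equiv_self] at h
  exact h

section Group

variable {G : Type*} [Group G] [Fintype G] (H : Subgroup G)

/-- Decomposition of `G` into left cosets of `H`. -/
noncomputable def cosetEquiv : ↥H × (G ⧸ H) ≃ G where
  toFun p := p.2.out * (p.1 : G)
  invFun g := (⟨((QuotientGroup.mk g : G ⧸ H)).out⁻¹ * g,
      (QuotientGroup.eq (s := H)).mp (QuotientGroup.out_eq' (QuotientGroup.mk g))⟩,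
    QuotientGroup.mk g)
  left_inv p := by
    obtain ⟨a, c⟩ := p
    have h1 : (QuotientGroup.mk (c.out * (a : G)) : G ⧸ H) = c := by
      rw [QuotientGroup.mk_mul_of_mem _ a.2, QuotientGroup.out_eq']
    refine Prod.ext ?_ ?_
    · apply Subtype.ext
      show ((QuotientGroup.mk (c.out * (a : G)) : G ⧸ H)).out⁻¹ * (c.out * (a : G)) = (a : G)
      rw [h1, inv_mul_cancel_left]
    · exact h1
  right_inv g := by
    show ((QuotientGroup.mk g : G ⧸ H)).out * (((QuotientGroup.mk g : G ⧸ H)).out⁻¹ * g) = g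
    rw [mul_inv_cancel_left]

/-- Extension by zero of a function on `H` to `G`. -/
noncomputable def extFun (x : ↥H → ℤ) : G → ℤ := fun g => if h : g ∈ H then x ⟨g, h⟩ else 0

theorem dir1 (x : ↥H → ℤ) : groupDet G (extFun H x) = groupDet ↥H x ^ H.index := by
  classical
  set N : Matrix G G ℤ := Matrix.of fun g h => extFun H x (g⁻¹ * h) with hN
  have h1 : groupDet G (extFun H x) = N.det := by
    unfold groupDet
    rw [← det_submatrix_equiv_self (Equiv.inv G) N]
    congr 1
    ext g h
    simp [hN, groupDet, Matrix.submatrix_apply, Equiv.inv_apply, inv_inv]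
  have h2 : N.submatrix (cosetEquiv H) (cosetEquiv H) =
      Matrix.blockDiagonal (fun _ : G ⧸ H => Matrix.of fun a b : ↥H => x (a⁻¹ * b)) := by
    ext ⟨a, c⟩ ⟨b, d⟩
    show extFun H x ((c.out * (a : G))⁻¹ * (d.out * (b : G))) = _
    rw [Matrix.blockDiagonal_apply]
    by_cases hcd : c = d
    · subst hcd
      rw [if_pos rfl]
      have he : (c.out * (a : G))⁻¹ * (c.out * (b : G)) = ((a⁻¹ * b : ↥H) : G) := by
        push_cast
        group
      rw [he]
      show (if h : ((a⁻¹ * b : ↥H) : G) ∈ H then x ⟨_, h⟩ else 0) = x (a⁻¹ * b)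
      rw [dif_pos (SetLike.coe_mem _)]
    · rw [if_neg hcd]
      have hmem : (c.out * (a : G))⁻¹ * (d.out * (b : G)) ∉ H := by
        intro hk
        apply hcd
        have h3 : c.out⁻¹ * d.out ∈ H := by
          have := H.mul_mem (H.mul_mem a.2 hk) (H.inv_mem b.2)
          have he : (a : G) * ((c.out * (a : G))⁻¹ * (d.out * (b : G))) * (b : G)⁻¹ =
              c.out⁻¹ * d.out := by group
          rwa [he] at this
        have h4 : (QuotientGroup.mk c.out : G ⧸ H) = QuotientGroup.mk d.out :=
          (QuotientGroup.eq (s := H)).mpr h3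
        rwa [QuotientGroup.out_eq', QuotientGroup.out_eq'] at h4
      show (if h : _ ∈ H then x ⟨_, h⟩ else 0) = 0
      rw [dif_neg hmem]
  have h3 : N.det = (Matrix.det (Matrix.of fun a b : ↥H => x (a⁻¹ * b))) ^ Fintype.card (G ⧸ H) := by
    rw [← det_submatrix_equiv_self (cosetEquiv H) N, h2, Matrix.det_blockDiagonal,
      Finset.prod_const, Finset.card_univ]
  have h4 : Matrix.det (Matrix.of fun a b : ↥H => x (a⁻¹ * b)) = groupDet ↥H x := by
    unfold groupDet
    rw [← det_submatrix_equiv_self (Equiv.inv ↥H)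
      (Matrix.of fun a b : ↥H => x (a⁻¹ * b))]
    congr 1
    ext a b
    simp [Matrix.submatrix_apply, Equiv.inv_apply, inv_inv]
  have h5 : Fintype.card (G ⧸ H) = H.index := by
    rw [Subgroup.index_eq_card, Nat.card_eq_fintype_card]
  rw [h1, h3, h4, h5]

end Group

end GDaux

namespace GDaux

section Reg

variable (K : Type*) [Group K] [Fintype K] [DecidableEq K]

/-- The left regular representation of a finite group by 0-1 matrices. -/
def regRep : K →* Matrix K K ℤ where
  toFun h := Matrix.of fun a b => if a = h * b then 1 else 0
  map_one' := by
    ext a b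
    simp [Matrix.one_apply]
  map_mul' g h := by
    ext a b
    simp only [Matrix.mul_apply, Matrix.of_apply, ite_mul, one_mul, zero_mul, mul_ite, mul_one,
      mul_zero]
    rw [Finset.sum_ite_eq' Finset.univ (h * b) (fun c => if a = g * c then (1 : ℤ) else 0)]
    simp [mul_assoc]

end Reg

section Abelian

variable {G : Type*} [Group G] [Fintype G] (H : Subgroup G)

set_option maxHeartbeats 1000000 in
theorem dir2 (hH : ∀ a b : G, a ∈ H → b ∈ H → a * b = b * a) (x : G → ℤ) :
    ∃ y : ↥H → ℤ, groupDet ↥H y = groupDet G x := by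
  classical
  letI : CommGroup ↥H :=
    { (inferInstance : Group ↥H) with
      mul_comm := fun a b => Subtype.ext (hH a b a.2 b.2) }
  let φ : MonoidAlgebra ℤ ↥H →+* Matrix ↥H ↥H ℤ :=
    (MonoidAlgebra.lift ℤ (Matrix ↥H ↥H ℤ) ↥H (regRep ↥H)).toRingHom
  have φ_apply : ∀ y : MonoidAlgebra ℤ ↥H, φ y = Matrix.of fun a b : ↥H => y.coeff (a * b⁻¹) := by
    intro y
    show MonoidAlgebra.lift ℤ (Matrix ↥H ↥H ℤ) ↥H (regRep ↥H) y = _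
    rw [MonoidAlgebra.lift_apply]
    rw [Finsupp.sum_fintype y.coeff (fun h r => r • regRep ↥H h) (fun h => zero_smul ℤ _)]
    ext a b
    have hc : ∀ h : ↥H, (a = h * b) = (h = a * b⁻¹) := by
      intro h
      apply propext
      constructor
      · intro e; rw [e]; group
      · intro e; rw [e]; group
    simp only [Matrix.sum_apply, Matrix.smul_apply, regRep, MonoidHom.coe_mk, OneHom.coe_mk,
      Matrix.of_apply, smul_ite, smul_eq_mul, mul_one, mul_zero, hc, mul_ite]
    rw [Finset.sum_ite_eq' Finset.univ (a * b⁻¹) (fun h => y.coeff h)]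
    simp
  set B : Matrix (G ⧸ H) (G ⧸ H) (MonoidAlgebra ℤ ↥H) :=
    Matrix.of fun c d => MonoidAlgebra.ofCoeff (Finsupp.equivFunOnFinite.symm
      (fun k : ↥H => x (c.out * (k : G) * d.out⁻¹))) with hB
  refine ⟨fun k => B.det.coeff k, ?_⟩
  have hmain := blk_det' φ B
  have h1 : groupDet G x = (blk (φ : MonoidAlgebra ℤ ↥H → _) B).det := by
    unfold groupDet
    rw [← det_submatrix_equiv_self ((Equiv.prodComm (G ⧸ H) ↥H).trans (cosetEquiv H))]
    congr 1
    ext ⟨c, a⟩ ⟨d, b⟩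
    show x ((c.out * (a : G)) * (d.out * (b : G))⁻¹) = φ (B c d) a b
    rw [φ_apply]
    show _ = (B c d).coeff (a * b⁻¹)
    have hBcd : (B c d).coeff (a * b⁻¹) = x (c.out * ((a * b⁻¹ : ↥H) : G) * d.out⁻¹) := by
      rw [hB]
      simp [Finsupp.equivFunOnFinite]
    rw [hBcd]
    congr 1
    push_cast
    group
  have h2 : (φ B.det).det = groupDet ↥H (fun k => B.det.coeff k) := by
    unfold groupDet
    rw [φ_apply]
    congr!
  rw [h1, hmain, h2]

end Abelian

end GDaux

/-- For a finite group `G` and an abelian subgroup `H`,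
`{α^[G:H] | α ∈ S(H)} ⊆ S(G) ⊆ S(H)`. -/
theorem pow_index_integerGroupDet_subset {G : Type*} [Group G] [Fintype G]
    (H : Subgroup G) (hH : ∀ a b : G, a ∈ H → b ∈ H → a * b = b * a) :
    {z : ℤ | ∃ α : ℤ, (∃ x : H → ℤ, groupDet H x = α) ∧ z = α ^ H.index} ⊆
        {z : ℤ | ∃ x : G → ℤ, groupDet G x = z} ∧
      {z : ℤ | ∃ x : G → ℤ, groupDet G x = z} ⊆
        {z : ℤ | ∃ x : H → ℤ, groupDet H x = z} := by
  constructor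
  · rintro z ⟨α, ⟨x, hx⟩, hz⟩
    refine ⟨GDaux.extFun H x, ?_⟩
    rw [GDaux.dir1, hx, ← hz]
  · rintro z ⟨x, hx⟩
    obtain ⟨y, hy⟩ := GDaux.dir2 H hH x
    exact ⟨y, by rw [hy, hx]⟩
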